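/- arXiv:1005.0781 — 2 statements merged into one kernel-verified Lean document; each statement's English description precedes it below -/
import Mathlib

section
/- For integers t with 0 ≤ t ≤ floor(n/q), the following identity holds: the sum over i from t to floor(n/q) of C(i,t)*a(n,i) equals (n-(q-1)t)!/t!. -/
open Finset

/-- `a` with `a+1`, ..., `a+q-1` (0-indexed) form an adjacent `q`-cycle of `π`. -/
def isAdjCycle (q : ℕ) {n : ℕ} (π : Equiv.Perm (Fin n)) (a : ℕ) : Prop :=
  a + q ≤ n ∧ ∀ i : Fin n, a ≤ i.val → i.val < a + q →
    (π i).val = if i.val = a + q - 1 then a else i.val + 1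

instance (q n : ℕ) (π : Equiv.Perm (Fin n)) (a : ℕ) : Decidable (isAdjCycle q π a) := by
  unfold isAdjCycle; infer_instance

/-- The number of adjacent `q`-cycles of a permutation of `{1,...,n}`. -/
def adjCycleCount (q : ℕ) {n : ℕ} (π : Equiv.Perm (Fin n)) : ℕ :=
  ((Finset.range n).filter (isAdjCycle q π)).card

/-- `numAqC q n k` = number of permutations of `{1,...,n}` with exactly `k` adjacent `q`-cycles. -/
def numAqC (q n k : ℕ) : ℕ :=
  (Finset.univ.filter (fun π : Equiv.Perm (Fin n) => adjCycleCount q π = k)).card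

/-- valid configuration of starting positions -/
def Valid (q n : ℕ) (S : Finset ℕ) : Prop :=
  (∀ a ∈ S, a + q ≤ n) ∧ ∀ a ∈ S, ∀ b ∈ S, a < b → a + q ≤ b

instance (q n : ℕ) (S : Finset ℕ) : Decidable (Valid q n S) := by
  unfold Valid; infer_instance

lemma adj_sep {q n : ℕ} (hq : 1 ≤ q) {π : Equiv.Perm (Fin n)} {a b : ℕ}
    (h1 : isAdjCycle q π a) (h2 : isAdjCycle q π b) (hab : a < b) : a + q ≤ b := by
  by_contra hcon
  have ha1 := h1.1
  have hb1 := h2.1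
  have hn : a + q - 1 < n := by omega
  have e1 := h1.2 ⟨a + q - 1, hn⟩ (by show a ≤ a + q - 1; omega) (by show a + q - 1 < a + q; omega)
  have e2 := h2.2 ⟨a + q - 1, hn⟩ (by show b ≤ a + q - 1; omega) (by show a + q - 1 < b + q; omega)
  simp only [Fin.val_mk] at e1 e2
  simp only [if_true] at e1
  rw [if_neg (by omega)] at e2
  omega

lemma valid_of_forall_adj {q n : ℕ} (hq : 1 ≤ q) {π : Equiv.Perm (Fin n)} {S : Finset ℕ}
    (h : ∀ a ∈ S, isAdjCycle q π a) : Valid q n S := by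
  refine ⟨fun a ha => (h a ha).1, fun a ha b hb hab => adj_sep hq (h a ha) (h b hb) hab⟩

lemma sep_card_le {q n : ℕ} (hq : 1 ≤ q) {S : Finset ℕ}
    (hfit : ∀ a ∈ S, a + q ≤ n) (hsep : ∀ a ∈ S, ∀ b ∈ S, a < b → a + q ≤ b) :
    S.card ≤ n / q := by
  have key : ∀ a ∈ S, ∀ b ∈ S, a < b → a / q < b / q := by
    intro a ha b hb hab
    have h1 : a + q ≤ b := hsep a ha b hb hab
    have : (a + q) / q ≤ b / q := Nat.div_le_div_right h1
    rw [Nat.add_div_right _ hq] at this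
    omega
  have : S.card ≤ (range (n / q)).card := by
    apply Finset.card_le_card_of_injOn (fun a => a / q)
    · intro a ha
      have h1 := hfit a ha
      have : (a + q) / q ≤ n / q := Nat.div_le_div_right h1
      rw [Nat.add_div_right _ hq] at this
      simp only [Finset.mem_coe, mem_range]; omega
    · intro a ha b hb hab
      rcases lt_trichotomy a b with h | h | h
      · exact absurd hab (Nat.ne_of_lt (key a ha b hb h))
      · exact h
      · exact absurd hab.symm (Nat.ne_of_lt (key b hb a ha h))
  simpa using this

def inBlocks (q : ℕ) (S : Finset ℕ) (x : ℕ) : Prop := ∃ a ∈ S, a ≤ x ∧ x < a + q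

instance (q : ℕ) (S : Finset ℕ) (x : ℕ) : Decidable (inBlocks q S x) := by
  unfold inBlocks; infer_instance

def blockOf (q : ℕ) (S : Finset ℕ) (x : ℕ) : ℕ := (S.filter (fun a => a ≤ x ∧ x < a + q)).sup id

lemma blockOf_spec {q n : ℕ} {S : Finset ℕ} (hsep : ∀ a ∈ S, ∀ b ∈ S, a < b → a + q ≤ b)
    {a x : ℕ} (ha : a ∈ S) (h1 : a ≤ x) (h2 : x < a + q) : blockOf q S x = a := by
  have hn : n = n := rfl
  have hfil : S.filter (fun b => b ≤ x ∧ x < b + q) = {a} := by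
    ext b
    simp only [mem_filter, mem_singleton]
    constructor
    · rintro ⟨hbS, hbx, hxb⟩
      rcases lt_trichotomy a b with h | h | h
      · have := hsep a ha b hbS h; omega
      · omega
      · have := hsep b hbS a ha h; omega
    · rintro rfl; exact ⟨ha, h1, h2⟩
  rw [blockOf, hfil]
  simp

lemma blockOf_mem {q : ℕ} {S : Finset ℕ} (hsep : ∀ a ∈ S, ∀ b ∈ S, a < b → a + q ≤ b)
    {x : ℕ} (hx : inBlocks q S x) :
    blockOf q S x ∈ S ∧ blockOf q S x ≤ x ∧ x < blockOf q S x + q := by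
  obtain ⟨a, ha, h1, h2⟩ := hx
  rw [blockOf_spec (n := 0) hsep ha h1 h2]
  exact ⟨ha, h1, h2⟩

lemma adj_inBlocks_iff {q n : ℕ} (hq : 1 ≤ q) {π : Equiv.Perm (Fin n)} {S : Finset ℕ}
    (h : ∀ a ∈ S, isAdjCycle q π a) (x : Fin n) :
    inBlocks q S (π x).val ↔ inBlocks q S x.val := by
  constructor
  · rintro ⟨a, ha, h1, h2⟩
    have haq := (h a ha).1
    by_cases hc : (π x).val = a
    · have hy := (h a ha).2 ⟨a + q - 1, by omega⟩ (by show a ≤ a + q - 1; omega)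
        (by show a + q - 1 < a + q; omega)
      simp only [Fin.val_mk, if_true] at hy
      have hee : π ⟨a + q - 1, by omega⟩ = π x := Fin.val_injective (by rw [hy, hc])
      have hxy : (⟨a + q - 1, by omega⟩ : Fin n) = x := π.injective hee
      have hxval := congrArg Fin.val hxy
      simp only [Fin.val_mk] at hxval
      exact ⟨a, ha, by omega, by omega⟩
    · have h1' : a < (π x).val := by omega
      have hy := (h a ha).2 ⟨(π x).val - 1, by omega⟩ (by show a ≤ (π x).val - 1; omega)
        (by show (π x).val - 1 < a + q; omega)
      simp only [Fin.val_mk] at hy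
      rw [if_neg (by omega)] at hy
      have hee : π ⟨(π x).val - 1, by omega⟩ = π x := Fin.val_injective (by rw [hy]; omega)
      have hxy : (⟨(π x).val - 1, by omega⟩ : Fin n) = x := π.injective hee
      have hxval := congrArg Fin.val hxy
      simp only [Fin.val_mk] at hxval
      exact ⟨a, ha, by omega, by omega⟩
  · rintro ⟨a, ha, h1, h2⟩
    have hy := (h a ha).2 x h1 h2
    by_cases hc : x.val = a + q - 1
    · rw [if_pos hc] at hy; exact ⟨a, ha, by omega, by omega⟩
    · rw [if_neg hc] at hy
      have haq := (h a ha).1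
      exact ⟨a, ha, by omega, by omega⟩

lemma card_not_inBlocks {q n : ℕ} (hq : 1 ≤ q) {S : Finset ℕ} (hV : Valid q n S) :
    Fintype.card {x : Fin n // ¬ inBlocks q S x.val} = n - q * S.card := by
  classical
  have h1 : Fintype.card {x : Fin n // inBlocks q S x.val} = q * S.card := by
    rw [Fintype.card_subtype]
    have hbij : (univ.filter (fun x : Fin n => inBlocks q S x.val)).card
        = (S.biUnion (fun a => Ico a (a + q))).card := by
      apply Finset.card_bij (fun x _ => x.val)
      · intro x hx
        simp only [mem_filter] at hx
        obtain ⟨a, ha, hh⟩ := hx.2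
        exact mem_biUnion.2 ⟨a, ha, mem_Ico.2 hh⟩
      · intro x _ y _ hxy
        exact Fin.val_injective hxy
      · intro b hb
        simp only [mem_biUnion, mem_Ico] at hb
        obtain ⟨a, ha, hab⟩ := hb
        have hbn : b < n := by have := hV.1 a ha; omega
        exact ⟨⟨b, hbn⟩, mem_filter.2 ⟨mem_univ _, ⟨a, ha, hab⟩⟩, rfl⟩
    rw [hbij, Finset.card_biUnion]
    · have hcongr : ∀ a ∈ S, (Ico a (a + q)).card = q := by
        intro a _; rw [Nat.card_Ico]; omega
      rw [Finset.sum_congr rfl hcongr, Finset.sum_const, smul_eq_mul, mul_comm]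
    · intro a ha b hb hab
      rw [Function.onFun, Finset.disjoint_left]
      intro x hxa hxb
      simp only [mem_Ico] at hxa hxb
      rcases lt_trichotomy a b with h | h | h
      · have := hV.2 a ha b hb h; omega
      · exact hab h
      · have := hV.2 b hb a ha h; omega
  rw [Fintype.card_subtype_compl, h1, Fintype.card_fin]

lemma card_fix {q n : ℕ} (hq : 1 ≤ q) {S : Finset ℕ} (hV : Valid q n S) :
    ((univ : Finset (Equiv.Perm (Fin n))).filter (fun π => ∀ a ∈ S, isAdjCycle q π a)).card
      = (n - q * S.card).factorial := by
  classical
  have hsep := hV.2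
  -- forward injection
  have hinj1 : Fintype.card {π : Equiv.Perm (Fin n) // ∀ a ∈ S, isAdjCycle q π a}
      ≤ Fintype.card (Equiv.Perm {x : Fin n // ¬ inBlocks q S x.val}) := by
    apply Fintype.card_le_of_injective
      (fun (πh : {π : Equiv.Perm (Fin n) // ∀ a ∈ S, isAdjCycle q π a}) => Equiv.Perm.subtypePerm (p := fun x : Fin n => ¬ inBlocks q S x.val) πh.1
        (fun x => not_congr (adj_inBlocks_iff hq πh.2 x)))
    rintro ⟨π, hπ⟩ ⟨π', hπ'⟩ heq
    apply Subtype.ext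
    apply Equiv.ext
    intro x
    by_cases hx : inBlocks q S x.val
    · obtain ⟨a, ha, h1, h2⟩ := hx
      have e1 := (hπ a ha).2 x h1 h2
      have e2 := (hπ' a ha).2 x h1 h2
      exact Fin.val_injective (e1.trans e2.symm)
    · have h2 := DFunLike.congr_fun heq ⟨x, hx⟩
      simp only [Equiv.Perm.subtypePerm_apply, Subtype.mk.injEq] at h2
      exact h2
  -- backward injection
  have hΨ : ∀ σ : Equiv.Perm {x : Fin n // ¬ inBlocks q S x.val},
      ∃ π : Equiv.Perm (Fin n), (∀ a ∈ S, isAdjCycle q π a) ∧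
        ∀ (x : Fin n) (hx : ¬ inBlocks q S x.val), π x = (σ ⟨x, hx⟩ : {x : Fin n // ¬ inBlocks q S x.val}).val := by
    intro σ
    set g : Fin n → Fin n := fun x =>
      if hx : inBlocks q S x.val then
        (if hc : x.val = blockOf q S x.val + q - 1 then
          ⟨blockOf q S x.val, by
            have hm := blockOf_mem hsep hx
            have := hV.1 _ hm.1; omega⟩
        else
          ⟨x.val + 1, by
            have hm := blockOf_mem hsep hx
            have := hV.1 _ hm.1; omega⟩)
      else (σ ⟨x, hx⟩ : {x : Fin n // ¬ inBlocks q S x.val}).val with hg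
    have hgval : ∀ (x : Fin n) (hx : inBlocks q S x.val),
        (g x).val = if x.val = blockOf q S x.val + q - 1 then blockOf q S x.val else x.val + 1 := by
      intro x hx
      rw [hg]
      simp only [dif_pos hx]
      by_cases hc : x.val = blockOf q S x.val + q - 1
      · simp only [dif_pos hc, if_pos hc]
      · simp only [dif_neg hc, if_neg hc]
    have hgval2 : ∀ (x : Fin n) (hx : ¬ inBlocks q S x.val),
        g x = (σ ⟨x, hx⟩ : {x : Fin n // ¬ inBlocks q S x.val}).val := by
      intro x hx
      rw [hg]
      simp only [dif_neg hx]
    have hgblock : ∀ (x : Fin n) (hx : inBlocks q S x.val),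
        inBlocks q S (g x).val ∧ blockOf q S (g x).val = blockOf q S x.val := by
      intro x hx
      have hm := blockOf_mem hsep hx
      have hv := hgval x hx
      by_cases hc : x.val = blockOf q S x.val + q - 1
      · rw [if_pos hc] at hv
        refine ⟨⟨_, hm.1, by omega, by omega⟩, ?_⟩
        rw [hv]; exact blockOf_spec (n := 0) hsep hm.1 (le_refl _) (by omega)
      · rw [if_neg hc] at hv
        refine ⟨⟨_, hm.1, by omega, by omega⟩, ?_⟩
        rw [hv]; exact blockOf_spec (n := 0) hsep hm.1 (by omega) (by omega)
    have hgnot : ∀ (x : Fin n) (hx : ¬ inBlocks q S x.val), ¬ inBlocks q S (g x).val := by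
      intro x hx
      rw [hgval2 x hx]
      exact (σ ⟨x, hx⟩).2
    have hginj : Function.Injective g := by
      intro x y hxy
      by_cases hx : inBlocks q S x.val <;> by_cases hy : inBlocks q S y.val
      · have hbx := hgblock x hx
        have hby := hgblock y hy
        have hmx := blockOf_mem hsep hx
        have hmy := blockOf_mem hsep hy
        have hab : blockOf q S x.val = blockOf q S y.val := by
          rw [← hbx.2, ← hby.2, hxy]
        have e : (g x).val = (g y).val := by rw [hxy]
        rw [hgval x hx, hgval y hy, hab] at e
        apply Fin.val_injective
        split_ifs at e <;> omega
      · exact absurd ((hxy ▸ (hgblock x hx).1)) (hgnot y hy)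
      · exact absurd ((hxy.symm ▸ (hgblock y hy).1)) (hgnot x hx)
      · rw [hgval2 x hx, hgval2 y hy] at hxy
        have := σ.injective (Subtype.coe_injective hxy)
        simpa using this
    have hgbij := Finite.injective_iff_bijective.mp hginj
    refine ⟨Equiv.ofBijective g hgbij, ?_, ?_⟩
    · intro a ha
      refine ⟨hV.1 a ha, ?_⟩
      intro i h1 h2
      have hx : inBlocks q S i.val := ⟨a, ha, h1, h2⟩
      have hb : blockOf q S i.val = a := blockOf_spec (n := 0) hsep ha h1 h2
      show (g i).val = _
      rw [hgval i hx, hb]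
    · intro x hx
      show g x = _
      exact hgval2 x hx
  have hinj2 : Fintype.card (Equiv.Perm {x : Fin n // ¬ inBlocks q S x.val})
      ≤ Fintype.card {π : Equiv.Perm (Fin n) // ∀ a ∈ S, isAdjCycle q π a} := by
    apply Fintype.card_le_of_injective (fun σ => ⟨(hΨ σ).choose, (hΨ σ).choose_spec.1⟩)
    intro σ σ' heq
    simp only [Subtype.mk.injEq] at heq
    have h1 := (hΨ σ).choose_spec.2
    have h2 := (hΨ σ').choose_spec.2
    apply Equiv.ext
    rintro ⟨x, hx⟩
    apply Subtype.ext
    rw [← h1 x hx, ← h2 x hx, heq]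
  have hcardeq : Fintype.card {π : Equiv.Perm (Fin n) // ∀ a ∈ S, isAdjCycle q π a}
      = Fintype.card (Equiv.Perm {x : Fin n // ¬ inBlocks q S x.val}) :=
    le_antisymm hinj1 hinj2
  rw [← Fintype.card_subtype, hcardeq, Fintype.card_perm, card_not_inBlocks hq hV]

def NV (q n t : ℕ) : ℕ := (((range n).powersetCard t).filter (Valid q n)).card

lemma NV_eq {q : ℕ} (hq : 1 ≤ q) : ∀ n t, NV q n t = (n - (q - 1) * t).choose t := by
  intro n
  induction n using Nat.strong_induction_on with
  | _ n IH =>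
    intro t
    match t with
    | 0 =>
      rw [NV, Finset.powersetCard_zero, Finset.filter_singleton,
        if_pos ⟨fun a ha => absurd ha (notMem_empty a),
          fun a ha => absurd ha (notMem_empty a)⟩]
      simp
    | t + 1 =>
      by_cases hqn : q ≤ n
      · -- recurrence
        set X := ((range n).powersetCard (t + 1)).filter (Valid q n) with hX
        have hsplit := Finset.card_filter_add_card_filter_not
          (s := X) (p := fun S => n - q ∈ S)
        have A1 : X.filter (fun S => ¬ n - q ∈ S)
            = ((range (n - 1)).powersetCard (t + 1)).filter (Valid q (n - 1)) := by
          ext S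
          simp only [hX, mem_filter, mem_powersetCard, Finset.subset_iff, mem_range]
          constructor
          · rintro ⟨⟨⟨hsub, hcard⟩, hfit, hsep⟩, hnot⟩
            have hfit' : ∀ a ∈ S, a + q ≤ n - 1 := by
              intro a ha
              have h1 := hfit a ha
              have h2 : a ≠ n - q := fun h => hnot (h ▸ ha)
              omega
            exact ⟨⟨fun {a} ha => by have := hfit' a ha; omega, hcard⟩, hfit', hsep⟩
          · rintro ⟨⟨hsub, hcard⟩, hfit, hsep⟩
            refine ⟨⟨⟨fun {a} ha => by have := hsub ha; omega, hcard⟩,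
              fun a ha => by have := hfit a ha; omega, hsep⟩, fun hmem => ?_⟩
            have := hfit _ hmem
            omega
        have A2 : (X.filter (fun S => n - q ∈ S)).card
            = (((range (n - q)).powersetCard t).filter (Valid q (n - q))).card := by
          apply Finset.card_bij' (fun S _ => S.erase (n - q)) (fun T _ => insert (n - q) T)
          · intro S hS
            simp only [hX, mem_filter] at hS
            exact Finset.insert_erase hS.2
          · intro T hT
            simp only [mem_filter, mem_powersetCard, Finset.subset_iff, mem_range] at hT
            apply Finset.erase_insert
            intro h
            have := hT.1.1 h
            omega
          · intro S hS
            simp only [hX, mem_filter, mem_powersetCard, Finset.subset_iff, mem_range] at hS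
            obtain ⟨⟨⟨hsub, hcard⟩, hfit, hsep⟩, hmem⟩ := hS
            have hlt : ∀ a ∈ S, a ≠ n - q → a < n - q := by
              intro a ha hne
              rcases lt_trichotomy a (n - q) with h | h | h
              · exact h
              · exact absurd h hne
              · have := hsep _ hmem a ha h
                have := hsub ha
                omega
            simp only [mem_filter, mem_powersetCard, Finset.subset_iff, mem_range]
            refine ⟨⟨fun {a} ha => ?_, ?_⟩, fun a ha => ?_, fun a ha b hb hab => ?_⟩
            · rw [Finset.mem_erase] at ha
              exact hlt a ha.2 ha.1
            · rw [Finset.card_erase_of_mem hmem, hcard]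
              omega
            · rw [Finset.mem_erase] at ha
              have := hsep a ha.2 _ hmem (hlt a ha.2 ha.1)
              omega
            · rw [Finset.mem_erase] at ha hb
              exact hsep a ha.2 b hb.2 hab
          · intro T hT
            simp only [mem_filter, mem_powersetCard, Finset.subset_iff, mem_range] at hT
            obtain ⟨⟨hsub, hcard⟩, hfit, hsep⟩ := hT
            have hnm : n - q ∉ T := fun h => by have := hsub h; omega
            simp only [hX, mem_filter, mem_powersetCard, Finset.subset_iff, mem_range]
            refine ⟨⟨⟨fun {a} ha => ?_, ?_⟩, fun a ha => ?_, fun a ha b hb hab => ?_⟩, ?_⟩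
            · rw [Finset.mem_insert] at ha
              rcases ha with rfl | ha
              · omega
              · have := hsub ha; omega
            · rw [Finset.card_insert_of_notMem hnm, hcard]
            · rw [Finset.mem_insert] at ha
              rcases ha with rfl | ha
              · omega
              · have := hfit a ha; omega
            · rw [Finset.mem_insert] at ha hb
              rcases ha with rfl | ha
              · rcases hb with rfl | hb
                · omega
                · have := hsub hb; omega
              · rcases hb with rfl | hb
                · have := hfit a ha; omega
                · exact hsep a ha b hb hab
            · exact Finset.mem_insert_self _ _
        have hc1 : NV q (n - 1) (t + 1) = ((n - 1) - (q - 1) * (t + 1)).choose (t + 1) :=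
          IH (n - 1) (by omega) (t + 1)
        have hc2 : NV q (n - q) t = ((n - q) - (q - 1) * t).choose t :=
          IH (n - q) (by omega) t
        have hgoal : NV q n (t + 1)
            = ((n - q) - (q - 1) * t).choose t + ((n - 1) - (q - 1) * (t + 1)).choose (t + 1) := by
          have h0 : NV q n (t + 1) = X.card := rfl
          rw [h0, ← hsplit, A2, A1]
          exact congrArg₂ (· + ·) hc2 hc1
        rw [hgoal]
        have hKeq : (n - q) - (q - 1) * t = (n - 1) - (q - 1) * (t + 1) := by
          have : (q - 1) * (t + 1) = (q - 1) * t + (q - 1) := by ring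
          omega
        set K := (n - 1) - (q - 1) * (t + 1) with hK
        rw [hKeq]
        by_cases hbig : (q - 1) * (t + 1) < n
        · have h1 : n - (q - 1) * (t + 1) = K + 1 := by
            have : (q - 1) * (t + 1) = (q - 1) * t + (q - 1) := by ring
            omega
          rw [h1, Nat.choose_succ_succ]
        · have ht1 : t ≠ 0 := by
            rintro rfl
            omega
          have hK0 : K = 0 := by
            have : (q - 1) * (t + 1) = (q - 1) * t + (q - 1) := by ring
            omega
          have h2 : n - (q - 1) * (t + 1) = 0 := by omega
          rw [hK0, h2, Nat.choose_eq_zero_of_lt (show 0 < t by omega),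
            Nat.choose_eq_zero_of_lt (show 0 < t + 1 by omega)]
      · -- n < q : both sides zero
        have hzero : NV q n (t + 1) = 0 := by
          rw [NV, Finset.card_eq_zero, Finset.filter_eq_empty_iff]
          intro S hS
          rw [mem_powersetCard] at hS
          intro hV
          have : S.Nonempty := Finset.card_pos.mp (by omega)
          obtain ⟨a, ha⟩ := this
          have := hV.1 a ha
          omega
        rw [hzero]
        have : n - (q - 1) * (t + 1) < t + 1 := by
          have h3 : q - 1 ≤ (q - 1) * (t + 1) := Nat.le_mul_of_pos_right _ (by omega)
          omega
        rw [Nat.choose_eq_zero_of_lt this]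

lemma adjCycleCount_le {q n : ℕ} (hq : 1 ≤ q) (π : Equiv.Perm (Fin n)) :
    adjCycleCount q π ≤ n / q := by
  apply sep_card_le hq
  · intro a ha
    exact ((mem_filter.1 ha).2).1
  · intro a ha b hb hab
    exact adj_sep hq (mem_filter.1 ha).2 (mem_filter.1 hb).2 hab

theorem stmt1 (n q t : ℕ) (hq : 1 ≤ q) (hqn : q ≤ n) (ht : t ≤ n / q) :
    (∑ i ∈ Finset.Icc t (n / q), (i.choose t) * (numAqC q n i) : ℚ) =
      ((n - (q - 1) * t).factorial : ℚ) / (t.factorial : ℚ) := by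
  classical
  set m := n - (q - 1) * t with hm
  have hsub1 : (q - 1) * t = q * t - t := by
    rw [Nat.sub_one_mul]
  have htq : t ≤ q * t := Nat.le_mul_of_pos_left t (by omega)
  have hqt : q * t ≤ n := by
    have h1 : q * t ≤ q * (n / q) := Nat.mul_le_mul_left _ ht
    have h2 : q * (n / q) ≤ n := Nat.mul_div_le n q
    omega
  have htm : t ≤ m := by omega
  have hmt : m - t = n - q * t := by omega
  have key : (∑ i ∈ Finset.Icc t (n / q), i.choose t * numAqC q n i)
      = m.choose t * (n - q * t).factorial := by
    have h1 : ∑ i ∈ Finset.Icc t (n / q), i.choose t * numAqC q n i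
        = ∑ i ∈ range (n / q + 1), i.choose t * numAqC q n i := by
      apply Finset.sum_subset
      · intro i hi
        rw [mem_Icc] at hi
        rw [mem_range]
        omega
      · intro i hi hni
        rw [mem_range] at hi
        rw [mem_Icc] at hni
        rw [Nat.choose_eq_zero_of_lt (by omega), zero_mul]
    have h2 : ∑ i ∈ range (n / q + 1), i.choose t * numAqC q n i
        = ∑ π : Equiv.Perm (Fin n), (adjCycleCount q π).choose t := by
      have hmaps : ∀ π ∈ (univ : Finset (Equiv.Perm (Fin n))),
          adjCycleCount q π ∈ range (n / q + 1) := by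
        intro π _
        rw [mem_range]
        have := adjCycleCount_le hq π
        omega
      rw [← Finset.sum_fiberwise_of_maps_to hmaps (fun π => (adjCycleCount q π).choose t)]
      apply Finset.sum_congr rfl
      intro i _
      rw [Finset.sum_congr rfl (fun π hπ => by rw [(mem_filter.1 hπ).2]),
        Finset.sum_const, smul_eq_mul, mul_comm]
      rfl
    have h3 : ∑ π : Equiv.Perm (Fin n), (adjCycleCount q π).choose t
        = ∑ S ∈ (range n).powersetCard t,
            ((univ : Finset (Equiv.Perm (Fin n))).filter
              (fun π => ∀ a ∈ S, isAdjCycle q π a)).card := by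
      have hps : ∀ π : Equiv.Perm (Fin n), (adjCycleCount q π).choose t
          = (((range n).powersetCard t).filter (fun S => ∀ a ∈ S, isAdjCycle q π a)).card := by
        intro π
        rw [adjCycleCount, ← Finset.card_powersetCard]
        congr 1
        ext S
        simp only [mem_powersetCard, mem_filter]
        constructor
        · rintro ⟨hsub, hcard⟩
          exact ⟨⟨fun {a} ha => (mem_filter.1 (hsub ha)).1, hcard⟩,
            fun a ha => (mem_filter.1 (hsub ha)).2⟩
        · rintro ⟨⟨hsub, hcard⟩, hall⟩
          exact ⟨fun {a} ha => mem_filter.2 ⟨hsub ha, hall a ha⟩, hcard⟩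
      simp_rw [hps]
      simp_rw [Finset.card_filter]
      rw [Finset.sum_comm]
    have h4 : ∀ S ∈ (range n).powersetCard t,
        ((univ : Finset (Equiv.Perm (Fin n))).filter
          (fun π => ∀ a ∈ S, isAdjCycle q π a)).card
        = if Valid q n S then (n - q * t).factorial else 0 := by
      intro S hS
      by_cases hV : Valid q n S
      · rw [if_pos hV, card_fix hq hV, (mem_powersetCard.1 hS).2]
      · rw [if_neg hV, Finset.card_eq_zero, Finset.filter_eq_empty_iff]
        intro π _ hall
        exact hV (valid_of_forall_adj hq hall)
    rw [h1, h2, h3, Finset.sum_congr rfl h4, Finset.sum_ite, Finset.sum_const,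
      Finset.sum_const_zero, add_zero, smul_eq_mul]
    have hNV : (((range n).powersetCard t).filter (fun S => Valid q n S)).card = NV q n t := rfl
    rw [hNV, NV_eq hq n t]
  have hcast : (∑ i ∈ Finset.Icc t (n / q), ((i.choose t : ℚ)) * ((numAqC q n i : ℕ) : ℚ))
      = ((∑ i ∈ Finset.Icc t (n / q), i.choose t * numAqC q n i : ℕ) : ℚ) := by
    push_cast
    rfl
  rw [hcast, key]
  have hfact : m.choose t * t.factorial * (m - t).factorial = m.factorial :=
    Nat.choose_mul_factorial_mul_factorial htm
  rw [hmt] at hfact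
  rw [eq_div_iff (by exact_mod_cast t.factorial_ne_zero)]
  have hgoal : (m.choose t * (n - q * t).factorial) * t.factorial = m.factorial := by
    rw [← hfact]; ring
  exact_mod_cast hgoal
end

section
/- If q divides n, then a(n-1, 1) = b_{n-q} + (-1)^{n/q}; otherwise a(n-1, 1) = b_{n-q}. -/
open Finset

def b (q n : ℕ) : ℕ := numAqC q n 0



/-- Admissibility of a set of starting positions of adjacent q-cycles. -/
def compat (q m : ℕ) (S : Finset ℕ) : Prop :=
  (∀ a ∈ S, a + q ≤ m) ∧ ∀ a ∈ S, ∀ b ∈ S, a < b → a + q ≤ b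

instance (q m : ℕ) : DecidablePred (compat q m) := by
  unfold compat; infer_instance

def adm (q m j : ℕ) : Finset (Finset ℕ) :=
  (Finset.powersetCard j (Finset.range m)).filter (compat q m)

def Fset (q : ℕ) (S : Finset ℕ) : Finset ℕ := S.biUnion (fun a => Finset.Ico a (a + q))

lemma card_Fset {q m : ℕ} {S : Finset ℕ} (hS : compat q m S) :
    (Fset q S).card = S.card * q := by
  rw [Fset, Finset.card_biUnion]
  · rw [Finset.sum_congr rfl (fun a _ => Nat.card_Ico a (a+q)), Finset.sum_congr rfl
      (fun a _ => by omega : ∀ a ∈ S, a + q - a = q), Finset.sum_const, smul_eq_mul]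
  · intro a ha b hb hab
    rw [Function.onFun, Finset.disjoint_left]
    intro x hx hx'
    simp only [Finset.mem_Ico] at hx hx'
    rcases Nat.lt_or_ge a b with h | h
    · have := hS.2 a ha b hb h; omega
    · have hba : b < a := by omega
      have := hS.2 b hb a ha hba; omega

lemma Fset_subset_range {q m : ℕ} {S : Finset ℕ} (hS : compat q m S) :
    Fset q S ⊆ Finset.range m := by
  intro x hx
  rw [Fset, Finset.mem_biUnion] at hx
  obtain ⟨a, ha, hxa⟩ := hx
  have := hS.1 a ha
  simp only [Finset.mem_Ico] at hxa
  simp only [Finset.mem_range]; omega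

lemma compat_card_le {q m j : ℕ} {S : Finset ℕ} (hS : compat q m S) (hc : S.card = j) :
    j * q ≤ m := by
  subst hc
  have h1 := card_Fset hS
  have h2 := Finset.card_le_card (Fset_subset_range hS)
  rw [Finset.card_range] at h2; omega

lemma adm_zero (q m : ℕ) : adm q m 0 = {∅} := by
  rw [adm, Finset.powersetCard_zero]
  rw [Finset.filter_singleton, if_pos]
  exact ⟨fun a ha => absurd ha (Finset.notMem_empty a),
         fun a ha => absurd ha (Finset.notMem_empty a)⟩

lemma adm_empty_of_lt {q m j : ℕ} (h : m < j * q) : adm q m j = ∅ := by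
  rw [Finset.eq_empty_iff_forall_notMem]
  intro S hS
  rw [adm, Finset.mem_filter, Finset.mem_powersetCard] at hS
  exact absurd (compat_card_le hS.2 hS.1.2) (by omega)

lemma adm_rec {q m j : ℕ} (hq : 1 ≤ q) (hm : q ≤ m) (hj : 1 ≤ j) :
    (adm q m j).card = (adm q (m-1) j).card + (adm q (m-q) (j-1)).card := by
  classical
  rw [← Finset.card_filter_add_card_filter_not (s := adm q m j)
      (p := fun S => (m - q) ∈ S), Nat.add_comm ((adm q (m-1) j).card)]
  congr 1
  · -- m - q ∈ S  ↦  erase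
    apply Finset.card_bij (i := fun S _ => S.erase (m - q))
    · intro S hS
      simp only [Finset.mem_filter] at hS
      obtain ⟨hS, hmem⟩ := hS
      rw [adm, Finset.mem_filter, Finset.mem_powersetCard] at hS
      obtain ⟨⟨hsub, hcard⟩, hc1, hc2⟩ := hS
      rw [adm, Finset.mem_filter, Finset.mem_powersetCard]
      have hlt : ∀ a ∈ S.erase (m - q), a + q ≤ m - q := by
        intro a ha
        rw [Finset.mem_erase] at ha
        obtain ⟨hne, haS⟩ := ha
        have h1 := hc1 a haS
        have : a < m - q := by
          rcases Nat.lt_or_ge a (m - q) with h | h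
          · exact h
          · exfalso
            have : m - q < a := by omega
            have := hc2 (m-q) hmem a haS this
            omega
        exact hc2 a haS (m-q) hmem this
      refine ⟨⟨?_, ?_⟩, ?_, ?_⟩
      · intro a ha
        have := hlt a ha; simp only [Finset.mem_range]; omega
      · rw [Finset.card_erase_of_mem hmem, hcard]
      · exact hlt
      · intro a ha b hb hab
        exact hc2 a (Finset.mem_of_mem_erase ha) b (Finset.mem_of_mem_erase hb) hab
    · intro S₁ h₁ S₂ h₂ heq
      simp only [Finset.mem_filter] at h₁ h₂
      rw [← Finset.insert_erase h₁.2, ← Finset.insert_erase h₂.2, heq]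
    · intro T hT
      rw [adm, Finset.mem_filter, Finset.mem_powersetCard] at hT
      obtain ⟨⟨hsub, hcard⟩, hc1, hc2⟩ := hT
      have hnot : (m - q) ∉ T := by
        intro h
        have := hsub h; simp only [Finset.mem_range] at this; omega
      refine ⟨insert (m - q) T, ?_, ?_⟩
      · simp only [Finset.mem_filter]
        constructor
        · rw [adm, Finset.mem_filter, Finset.mem_powersetCard]
          refine ⟨⟨?_, ?_⟩, ?_, ?_⟩
          · intro a ha
            rcases Finset.mem_insert.1 ha with rfl | haT
            · simp only [Finset.mem_range]; omega
            · have h1 := hsub haT; simp only [Finset.mem_range] at h1 ⊢; omega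
          · rw [Finset.card_insert_of_notMem hnot, hcard]; omega
          · intro a ha
            rcases Finset.mem_insert.1 ha with rfl | haT
            · omega
            · have := hc1 a haT; omega
          · intro a ha b hb hab
            rcases Finset.mem_insert.1 ha with rfl | haT <;>
              rcases Finset.mem_insert.1 hb with rfl | hbT
            · omega
            · exfalso; have := hsub hbT; simp only [Finset.mem_range] at this; omega
            · exact hc1 a haT
            · exact hc2 a haT b hbT hab
        · exact Finset.mem_insert_self _ _
      · rw [Finset.erase_insert hnot]
  · -- m - q ∉ S  ↦  identity
    apply Finset.card_bij (i := fun S _ => S)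
    · intro S hS
      simp only [Finset.mem_filter] at hS
      obtain ⟨hS, hmem⟩ := hS
      rw [adm, Finset.mem_filter, Finset.mem_powersetCard] at hS
      obtain ⟨⟨hsub, hcard⟩, hc1, hc2⟩ := hS
      rw [adm, Finset.mem_filter, Finset.mem_powersetCard]
      have key : ∀ a ∈ S, a + q ≤ m - 1 := by
        intro a ha
        have h1 := hc1 a ha
        rcases Nat.lt_or_ge (a + q) m with h | h
        · omega
        · exfalso; apply hmem
          have : a = m - q := by omega
          rwa [← this]
      refine ⟨⟨?_, hcard⟩, key, hc2⟩
      intro a ha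
      have := key a ha; simp only [Finset.mem_range]; omega
    · intro S₁ _ S₂ _ h; exact h
    · intro T hT
      rw [adm, Finset.mem_filter, Finset.mem_powersetCard] at hT
      obtain ⟨⟨hsub, hcard⟩, hc1, hc2⟩ := hT
      refine ⟨T, ?_, rfl⟩
      simp only [Finset.mem_filter]
      constructor
      · rw [adm, Finset.mem_filter, Finset.mem_powersetCard]
        refine ⟨⟨?_, hcard⟩, ?_, hc2⟩
        · intro a ha; have := hc1 a ha; simp only [Finset.mem_range]; omega
        · intro a ha; have := hc1 a ha; omega
      · intro hmem
        have := hc1 (m - q) hmem; omega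

lemma adm_card (q : ℕ) (hq : 1 ≤ q) : ∀ m j : ℕ,
    (adm q m j).card = (m - j * (q - 1)).choose j := by
  intro m
  induction m using Nat.strong_induction_on with
  | _ m ih =>
    intro j
    rcases Nat.eq_zero_or_pos j with rfl | hj
    · rw [adm_zero]; simp
    rcases Nat.lt_or_ge m (j * q) with h | h
    · rw [adm_empty_of_lt h, Finset.card_empty]
      rw [eq_comm, Nat.choose_eq_zero_iff]
      have : j * (q - 1) + j = j * q := by
        have : q - 1 + 1 = q := by omega
        calc j * (q-1) + j = j * (q - 1 + 1) := by ring
        _ = j * q := by rw [this]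
      omega
    · have hqm : q ≤ m := le_trans (by nlinarith) h
      have hm1 : 1 ≤ m := le_trans hq hqm
      rw [adm_rec hq hqm hj, ih (m-1) (by omega) j, ih (m-q) (by omega) (j-1)]
      have hjq1 : j * (q - 1) + j ≤ m := by
        have : j * (q - 1) + j = j * q := by
          have h1 : q - 1 + 1 = q := by omega
          calc j * (q-1) + j = j * (q - 1 + 1) := by ring
          _ = j * q := by rw [h1]
        omega
      have e1 : m - 1 - j * (q-1) = (m - j * (q-1)) - 1 := by omega
      have e2 : m - q - (j-1) * (q-1) = (m - j * (q-1)) - 1 := by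
        have : (j - 1) * (q - 1) + (q - 1) = j * (q - 1) := by
          have h1 : j - 1 + 1 = j := by omega
          calc (j-1) * (q-1) + (q-1) = (j - 1 + 1) * (q-1) := by ring
          _ = j * (q-1) := by rw [h1]
        omega
      rw [e1, e2]
      have hM : 1 ≤ m - j * (q-1) := by omega
      obtain ⟨M, hMe⟩ : ∃ M, m - j * (q-1) = M + 1 := ⟨m - j*(q-1) - 1, by omega⟩
      obtain ⟨i, hie⟩ : ∃ i, j = i + 1 := ⟨j - 1, by omega⟩
      rw [hMe, hie]
      simp only [Nat.add_sub_cancel]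
      rw [Nat.choose_succ_succ]
      exact Nat.add_comm _ _


/-- A single adjacent q-cycle as a permutation. -/
lemma exists_single_cycle {q m a : ℕ} (hq : 1 ≤ q) (ha : a + q ≤ m) :
    ∃ c : Equiv.Perm (Fin m),
      (∀ i : Fin m, a ≤ i.val → i.val < a + q →
        (c i).val = if i.val = a + q - 1 then a else i.val + 1) ∧
      (∀ x : Fin m, (x.val < a ∨ a + q ≤ x.val) → c x = x) := by
  obtain ⟨p, rfl⟩ : ∃ p, q = p + 1 := ⟨q - 1, by omega⟩
  have hemb : Function.Injective (fun t : Fin (p+1) => (⟨a + t.val, by omega⟩ : Fin m)) := by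
    intro t₁ t₂ h
    apply Fin.ext
    have := congrArg Fin.val h
    simpa using this
  set emb : Fin (p+1) ↪ Fin m := ⟨fun t => ⟨a + t.val, by omega⟩, hemb⟩ with hembdef
  refine ⟨(finRotate (p+1)).viaFintypeEmbedding emb, ?_, ?_⟩
  · intro i h1 h2
    have hi : i = emb ⟨i.val - a, by omega⟩ := by
      apply Fin.ext; simp [hembdef]; omega
    rw [hi, Equiv.Perm.viaFintypeEmbedding_apply_image, finRotate_succ_apply]
    simp only [hembdef, Function.Embedding.coeFn_mk]
    have hval : ((⟨i.val - a, by omega⟩ : Fin (p+1)) + 1).val = (i.val - a + 1) % (p + 1) := by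
      rw [Fin.add_def]; simp
    rw [hval]
    rcases Nat.eq_or_lt_of_le (Nat.le_of_lt_succ h2 : i.val ≤ a + p) with he | hlt
    · have h3 : i.val - a + 1 = p + 1 := by omega
      rw [h3, Nat.mod_self, if_pos (by omega)]; omega
    · rw [Nat.mod_eq_of_lt (by omega), if_neg (by omega)]; omega
  · intro x hx
    apply Equiv.Perm.viaFintypeEmbedding_apply_notMem_range
    rintro ⟨t, ht⟩
    have := congrArg Fin.val ht
    simp [hembdef] at this
    have := t.isLt
    omega

lemma exists_sigma {q m : ℕ} (hq : 1 ≤ q) :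
    ∀ S : Finset ℕ, compat q m S →
    ∃ σ : Equiv.Perm (Fin m), (∀ a ∈ S, isAdjCycle q σ a) ∧
      ∀ x : Fin m, x.val ∉ Fset q S → σ x = x := by
  intro S
  induction S using Finset.induction_on with
  | empty =>
    intro _
    exact ⟨1, fun a ha => absurd ha (Finset.notMem_empty a), fun x _ => rfl⟩
  | insert a S' ha ih =>
    intro hS
    have hS' : compat q m S' := by
      refine ⟨fun b hb => hS.1 b (Finset.mem_insert_of_mem hb), ?_⟩
      intro b hb c hc hbc
      exact hS.2 b (Finset.mem_insert_of_mem hb) c (Finset.mem_insert_of_mem hc) hbc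
    obtain ⟨σ', hσ'1, hσ'2⟩ := ih hS'
    have haq : a + q ≤ m := hS.1 a (Finset.mem_insert_self a S')
    obtain ⟨c, hc1, hc2⟩ := exists_single_cycle hq haq
    -- disjointness of [a, a+q) from intervals of S'
    have hdisj : ∀ b ∈ S', ∀ x : ℕ, b ≤ x → x < b + q → (x < a ∨ a + q ≤ x) := by
      intro b hb x hbx hxb
      have hne : a ≠ b := fun h => ha (h ▸ hb)
      rcases Nat.lt_or_ge a b with h | h
      · right
        have := hS.2 a (Finset.mem_insert_self a S') b (Finset.mem_insert_of_mem hb) h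
        omega
      · have hba : b < a := by omega
        left
        have := hS.2 b (Finset.mem_insert_of_mem hb) a (Finset.mem_insert_self a S') hba
        omega
    refine ⟨c * σ', ?_, ?_⟩
    · intro b hb
      rcases Finset.mem_insert.1 hb with rfl | hbS'
      · refine ⟨haq, fun i h1 h2 => ?_⟩
        have hiF : i.val ∉ Fset q S' := by
          intro hmem
          rw [Fset, Finset.mem_biUnion] at hmem
          obtain ⟨b', hb', hib'⟩ := hmem
          rw [Finset.mem_Ico] at hib'
          rcases hdisj b' hb' i.val hib'.1 hib'.2 with h | h <;> omega
        rw [Equiv.Perm.mul_apply, hσ'2 i hiF]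
        exact hc1 i h1 h2
      · obtain ⟨hbq, hform⟩ := hσ'1 b hbS'
        refine ⟨hbq, fun i h1 h2 => ?_⟩
        have hval := hform i h1 h2
        have hrange : b ≤ (σ' i).val ∧ (σ' i).val < b + q := by
          split at hval <;> omega
        have := hdisj b hbS' (σ' i).val hrange.1 hrange.2
        rw [Equiv.Perm.mul_apply, hc2 (σ' i) this]
        exact hval
    · intro x hx
      rw [Fset, Finset.biUnion_insert, Finset.mem_union] at hx
      push_neg at hx
      obtain ⟨hx1, hx2⟩ := hx
      rw [Finset.mem_Ico] at hx1
      rw [Equiv.Perm.mul_apply, hσ'2 x hx2, hc2 x (by omega)]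

lemma card_fixed_points {q m j : ℕ} (hq : 1 ≤ q) (S : Finset ℕ)
    (hsub : S ⊆ Finset.range m) (hcard : S.card = j) (hS : compat q m S)
    (hFcard : (Fset q S).card = j * q) (hFsub : Fset q S ⊆ Finset.range m) :
    (Finset.univ.filter fun π : Equiv.Perm (Fin m) => ∀ a ∈ S, isAdjCycle q π a).card
      = Nat.factorial (m - j * q) := by
  classical
  obtain ⟨σ, hσ1, hσ2⟩ := exists_sigma hq S hS
  -- rewrite the filter as agreement with σ on Fset
  have hset : (Finset.univ.filter fun π : Equiv.Perm (Fin m) => ∀ a ∈ S, isAdjCycle q π a)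
      = Finset.univ.filter (fun π : Equiv.Perm (Fin m) =>
          ∀ x : Fin m, x.val ∈ Fset q S → π x = σ x) := by
    ext π
    simp only [Finset.mem_filter, Finset.mem_univ, true_and]
    constructor
    · intro hπ x hx
      rw [Fset, Finset.mem_biUnion] at hx
      obtain ⟨b, hb, hxb⟩ := hx
      rw [Finset.mem_Ico] at hxb
      apply Fin.ext
      rw [(hπ b hb).2 x hxb.1 hxb.2, (hσ1 b hb).2 x hxb.1 hxb.2]
    · intro hπ b hb
      refine ⟨hS.1 b hb, fun i h1 h2 => ?_⟩
      have hiF : i.val ∈ Fset q S := by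
        rw [Fset, Finset.mem_biUnion]
        exact ⟨b, hb, Finset.mem_Ico.2 ⟨h1, h2⟩⟩
      rw [hπ i hiF]
      exact (hσ1 b hb).2 i h1 h2
  rw [hset]
  -- bijection with permutations fixing Fset pointwise
  have hcard2 : (Finset.univ.filter (fun π : Equiv.Perm (Fin m) =>
          ∀ x : Fin m, x.val ∈ Fset q S → π x = σ x)).card
      = (Finset.univ.filter (fun τ : Equiv.Perm (Fin m) =>
          ∀ x : Fin m, x.val ∈ Fset q S → τ x = x)).card := by
    apply Finset.card_bij (i := fun π _ => σ⁻¹ * π)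
    · intro π hπ
      simp only [Finset.mem_filter, Finset.mem_univ, true_and] at hπ ⊢
      intro x hx
      rw [Equiv.Perm.mul_apply, hπ x hx, Equiv.Perm.inv_def, Equiv.symm_apply_apply]
    · intro π₁ _ π₂ _ h
      exact mul_left_cancel h
    · intro τ hτ
      simp only [Finset.mem_filter, Finset.mem_univ, true_and] at hτ
      refine ⟨σ * τ, ?_, by group⟩
      simp only [Finset.mem_filter, Finset.mem_univ, true_and]
      intro x hx
      rw [Equiv.Perm.mul_apply, hτ x hx]
  rw [hcard2]
  -- count permutations fixing Fset pointwise
  have : (Finset.univ.filter (fun τ : Equiv.Perm (Fin m) =>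
          ∀ x : Fin m, x.val ∈ Fset q S → τ x = x)).card
      = Fintype.card {τ : Equiv.Perm (Fin m) // ∀ x : Fin m, x.val ∈ Fset q S → τ x = x} := by
    rw [Fintype.card_subtype]
  rw [this]
  have E : Equiv.Perm {x : Fin m // x.val ∉ Fset q S}
      ≃ {τ : Equiv.Perm (Fin m) // ∀ x : Fin m, x.val ∈ Fset q S → τ x = x} :=
    (Equiv.Perm.subtypeEquivSubtypePerm (fun x : Fin m => x.val ∉ Fset q S)).trans
      (Equiv.subtypeEquivRight (by
        intro τ
        constructor
        · intro h x hx; exact h x (not_not_intro hx)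
        · intro h x hx; exact h x (not_not.1 hx)))
  rw [← Fintype.card_congr E, Fintype.card_perm]
  congr 1
  rw [Fintype.card_subtype]
  have hsplit := Finset.card_filter_add_card_filter_not
    (s := (Finset.univ : Finset (Fin m))) (p := fun x : Fin m => x.val ∈ Fset q S)
  have hin : (Finset.univ.filter (fun x : Fin m => x.val ∈ Fset q S)).card
      = (Fset q S).card := by
    apply Finset.card_bij (i := fun x _ => x.val)
    · intro x hx; simpa using hx
    · intro x₁ _ x₂ _ h; exact Fin.ext h
    · intro y hy
      have := hFsub hy
      rw [Finset.mem_range] at this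
      exact ⟨⟨y, this⟩, by simpa using hy, rfl⟩
  have hcardu : (Finset.univ : Finset (Fin m)).card = m := by simp
  have : (Finset.univ.filter (fun x : Fin m => ¬ x.val ∈ Fset q S)).card = m - j * q := by
    omega
  convert this using 2

lemma alt0 {c m : ℕ} (hc : c ≤ m) :
    ∑ j ∈ Finset.range (m+1), (-1:ℤ)^j * (c.choose j) = if c = 0 then 1 else 0 := by
  rw [← Int.alternating_sum_range_choose (n := c)]
  apply (Finset.sum_subset (Finset.range_subset_range.2 (by omega))
    (fun x hx hnx => ?_)).symm
  have hcx : c < x := by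
    simp only [Finset.mem_range] at hx hnx; omega
  rw [Nat.choose_eq_zero_of_lt hcx]
  simp

lemma alt1 {c m : ℕ} (hc : c ≤ m) :
    ∑ j ∈ Finset.range (m+1), (-1:ℤ)^(j+1) * j * (c.choose j) = if c = 1 then 1 else 0 := by
  rcases Nat.eq_zero_or_pos c with rfl | hcpos
  · rw [Finset.sum_eq_zero, if_neg (by omega)]
    intro j hj
    rcases Nat.eq_zero_or_pos j with rfl | hjpos
    · simp
    · rw [Nat.choose_eq_zero_of_lt hjpos]; simp
  · obtain ⟨c', rfl⟩ : ∃ c', c = c' + 1 := ⟨c - 1, by omega⟩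
    obtain ⟨m', rfl⟩ : ∃ m', m = m' + 1 := ⟨m - 1, by omega⟩
    rw [Finset.sum_range_succ']
    have h0 : (-1:ℤ)^(0+1) * (0:ℕ) * ((c'+1).choose 0) = 0 := by simp
    rw [h0, add_zero]
    have hterm : ∀ k, (-1:ℤ)^(k+1+1) * (k+1 : ℕ) * ((c'+1).choose (k+1))
        = (c'+1 : ℤ) * ((-1:ℤ)^k * (c'.choose k)) := by
      intro k
      have h := Nat.add_one_mul_choose_eq c' k
      have h' : ((c'+1) * c'.choose k : ℤ) = ((c'+1).choose (k+1) * (k+1) : ℤ) := by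
        exact_mod_cast congrArg (Nat.cast : ℕ → ℤ) h
      have hp : (-1:ℤ)^(k+1+1) = (-1)^k := by ring
      push_cast
      push_cast at h'
      rw [hp]
      linear_combination (-(-1:ℤ)^k) * h' 
    rw [Finset.sum_congr rfl (fun k _ => hterm k), ← Finset.mul_sum]
    rw [alt0 (by omega : c' ≤ m')]
    rcases Nat.eq_zero_or_pos c' with rfl | h
    · simp
    · rw [if_neg (by omega), if_neg (by omega), mul_zero]


lemma Tcount {q : ℕ} (hq : 1 ≤ q) (m j : ℕ) :
    ∑ π : Equiv.Perm (Fin m), (adjCycleCount q π).choose j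
      = (adm q m j).card * Nat.factorial (m - j * q) := by
  classical
  have h1 : ∀ π : Equiv.Perm (Fin m), (adjCycleCount q π).choose j
      = ∑ S ∈ (Finset.range m).powersetCard j,
          (if ∀ a ∈ S, isAdjCycle q π a then 1 else 0) := by
    intro π
    rw [adjCycleCount, ← Finset.card_powersetCard]
    have hps : ((Finset.range m).filter (isAdjCycle q π)).powersetCard j
        = ((Finset.range m).powersetCard j).filter (fun S => ∀ a ∈ S, isAdjCycle q π a) := by
      ext S
      simp only [Finset.mem_powersetCard, Finset.mem_filter]
      constructor
      · rintro ⟨hsub, hcard⟩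
        exact ⟨⟨fun x hx => (Finset.mem_filter.1 (hsub hx)).1, hcard⟩,
          fun a ha => (Finset.mem_filter.1 (hsub ha)).2⟩
      · rintro ⟨⟨hsub, hcard⟩, hall⟩
        exact ⟨fun x hx => Finset.mem_filter.2 ⟨hsub hx, hall x hx⟩, hcard⟩
    rw [hps, Finset.sum_boole, Nat.cast_id]
  rw [Finset.sum_congr rfl (fun π _ => h1 π), Finset.sum_comm]
  have h2 : ∀ S ∈ (Finset.range m).powersetCard j,
      (∑ π : Equiv.Perm (Fin m), if ∀ a ∈ S, isAdjCycle q π a then 1 else 0)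
        = if compat q m S then Nat.factorial (m - j * q) else 0 := by
    intro S hS
    rw [Finset.mem_powersetCard] at hS
    rw [Finset.sum_boole, Nat.cast_id]
    by_cases hc : compat q m S
    · rw [if_pos hc]
      exact card_fixed_points hq S hS.1 hS.2 hc (by rw [card_Fset hc, hS.2])
        (Fset_subset_range hc)
    · rw [if_neg hc, Finset.card_eq_zero, Finset.eq_empty_iff_forall_notMem]
      intro π hπ
      simp only [Finset.mem_filter, Finset.mem_univ, true_and] at hπ
      apply hc
      constructor
      · exact fun a ha => (hπ a ha).1
      · intro a ha b hb hab
        by_contra hcon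
        have hblt : b < a + q := by omega
        have haq : a + q ≤ m := (hπ a ha).1
        have hbq : b + q ≤ m := (hπ b hb).1
        set i : Fin m := ⟨a + q - 1, by omega⟩ with hidef
        have hva := (hπ a ha).2 i (by simp [hidef]; omega) (by simp [hidef]; omega)
        have hvb := (hπ b hb).2 i (by simp [hidef]; omega) (by simp [hidef]; omega)
        rw [if_pos (by simp [hidef])] at hva
        rw [if_neg (by simp [hidef]; omega)] at hvb
        simp only [hidef] at hva hvb
        omega
  rw [Finset.sum_congr rfl h2, Finset.sum_ite, Finset.sum_const_zero, add_zero,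
    Finset.sum_const, smul_eq_mul]
  rfl

lemma count_le {q m : ℕ} (π : Equiv.Perm (Fin m)) : adjCycleCount q π ≤ m :=
  le_trans (Finset.card_filter_le _ _) (by simp)

lemma b_eq {q : ℕ} (hq : 1 ≤ q) (m : ℕ) :
    (b q m : ℤ) = ∑ j ∈ Finset.range (m+1),
      (-1:ℤ)^j * ((adm q m j).card : ℤ) * (Nat.factorial (m - j * q) : ℤ) := by
  classical
  symm
  have key : ∀ j, ((adm q m j).card : ℤ) * (Nat.factorial (m - j * q) : ℤ)
      = ∑ π : Equiv.Perm (Fin m), ((adjCycleCount q π).choose j : ℤ) := by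
    intro j
    have h := Tcount hq m j
    exact_mod_cast h.symm
  calc ∑ j ∈ Finset.range (m+1),
      (-1:ℤ)^j * ((adm q m j).card : ℤ) * (Nat.factorial (m - j * q) : ℤ)
      = ∑ j ∈ Finset.range (m+1), (-1:ℤ)^j *
          ∑ π : Equiv.Perm (Fin m), ((adjCycleCount q π).choose j : ℤ) := by
        apply Finset.sum_congr rfl
        intro j _
        rw [mul_assoc, key j]
    _ = ∑ π : Equiv.Perm (Fin m), ∑ j ∈ Finset.range (m+1),
          (-1:ℤ)^j * ((adjCycleCount q π).choose j : ℤ) := by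
        rw [Finset.sum_comm]
        apply Finset.sum_congr rfl
        intro π _
        rw [Finset.mul_sum]
    _ = ∑ π : Equiv.Perm (Fin m), (if adjCycleCount q π = 0 then (1:ℤ) else 0) := by
        apply Finset.sum_congr rfl
        intro π _
        exact alt0 (count_le π)
    _ = ((Finset.univ.filter
          (fun π : Equiv.Perm (Fin m) => adjCycleCount q π = 0)).card : ℤ) := by
        rw [Finset.sum_boole]
    _ = (b q m : ℤ) := by rw [b, numAqC]

lemma a1_eq {q : ℕ} (hq : 1 ≤ q) (m : ℕ) :
    (numAqC q m 1 : ℤ) = ∑ j ∈ Finset.range (m+1),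
      (-1:ℤ)^(j+1) * j * ((adm q m j).card : ℤ) * (Nat.factorial (m - j * q) : ℤ) := by
  classical
  symm
  have key : ∀ j, ((adm q m j).card : ℤ) * (Nat.factorial (m - j * q) : ℤ)
      = ∑ π : Equiv.Perm (Fin m), ((adjCycleCount q π).choose j : ℤ) := by
    intro j
    have h := Tcount hq m j
    exact_mod_cast h.symm
  calc ∑ j ∈ Finset.range (m+1),
      (-1:ℤ)^(j+1) * j * ((adm q m j).card : ℤ) * (Nat.factorial (m - j * q) : ℤ)
      = ∑ j ∈ Finset.range (m+1), (-1:ℤ)^(j+1) * j *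
          ∑ π : Equiv.Perm (Fin m), ((adjCycleCount q π).choose j : ℤ) := by
        apply Finset.sum_congr rfl
        intro j _
        rw [mul_assoc ((-1:ℤ)^(j+1) * j), key j]
    _ = ∑ π : Equiv.Perm (Fin m), ∑ j ∈ Finset.range (m+1),
          (-1:ℤ)^(j+1) * j * ((adjCycleCount q π).choose j : ℤ) := by
        rw [Finset.sum_comm]
        apply Finset.sum_congr rfl
        intro π _
        rw [Finset.mul_sum]
    _ = ∑ π : Equiv.Perm (Fin m), (if adjCycleCount q π = 1 then (1:ℤ) else 0) := by
        apply Finset.sum_congr rfl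
        intro π _
        exact alt1 (count_le π)
    _ = ((Finset.univ.filter
          (fun π : Equiv.Perm (Fin m) => adjCycleCount q π = 1)).card : ℤ) := by
        rw [Finset.sum_boole]
    _ = (numAqC q m 1 : ℤ) := by rw [numAqC]



lemma final_sum (q n' : ℕ) (hq : 1 ≤ q) (hqn : q ≤ n') :
    ∑ j ∈ Finset.range (n'+1),
        (-1:ℤ)^(j+1) * j * ((n' - j*(q-1)).choose j : ℤ) * (Nat.factorial (n' - j*q) : ℤ)
    = (∑ j ∈ Finset.range (n'+1-q+1),
        (-1:ℤ)^j * (((n'+1-q) - j*(q-1)).choose j : ℤ) * (Nat.factorial ((n'+1-q) - j*q) : ℤ))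
      + (if q ∣ (n'+1) then (-1:ℤ)^((n'+1)/q) else 0) := by
  classical
  -- extend the RHS sum to range (n'+1)
  have hstep1 : ∑ j ∈ Finset.range (n'+1-q+1),
        (-1:ℤ)^j * (((n'+1-q) - j*(q-1)).choose j : ℤ) * (Nat.factorial ((n'+1-q) - j*q) : ℤ)
      = ∑ j ∈ Finset.range (n'+1),
        (-1:ℤ)^j * (((n'+1-q) - j*(q-1)).choose j : ℤ) * (Nat.factorial ((n'+1-q) - j*q) : ℤ) := by
    apply Finset.sum_subset (Finset.range_subset_range.2 (by omega))
    intro x hx hnx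
    rw [Finset.mem_range] at hx
    have hxlarge : n'+1-q+1 ≤ x := by
      by_contra hcon
      exact hnx (Finset.mem_range.2 (by omega))
    rcases Nat.lt_or_ge q 2 with hq1 | hq2
    · omega
    · have hxq : x * 1 ≤ x * (q-1) := Nat.mul_le_mul_left x (by omega)
      rw [Nat.choose_eq_zero_of_lt (by omega)]
      simp
  rw [hstep1]
  -- peel off the terms
  rw [Finset.sum_range_succ'
    (fun j => (-1:ℤ)^(j+1) * j * ((n' - j*(q-1)).choose j : ℤ) * (Nat.factorial (n' - j*q) : ℤ)) n']
  rw [Finset.sum_range_succ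
    (fun j => (-1:ℤ)^j * (((n'+1-q) - j*(q-1)).choose j : ℤ) * (Nat.factorial ((n'+1-q) - j*q) : ℤ)) n']
  simp only [Nat.cast_zero, mul_zero, zero_mul, add_zero]
  -- key pointwise identity
  have key : ∀ i ∈ Finset.range n',
      (-1:ℤ)^(i+1+1) * (i+1 : ℕ) * ((n' - (i+1)*(q-1)).choose (i+1) : ℤ)
          * (Nat.factorial (n' - (i+1)*q) : ℤ)
      = (-1:ℤ)^i * (((n'+1-q) - i*(q-1)).choose i : ℤ)
          * (Nat.factorial ((n'+1-q) - i*q) : ℤ)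
        + (if (i+1)*q = n'+1 then (-1:ℤ)^(i+1) else 0) := by
    intro i _
    have hAB : (i+1)*q = (i+1)*(q-1) + (i+1) := by
      have h1 : q = (q-1)+1 := by omega
      calc (i+1)*q = (i+1)*((q-1)+1) := by rw [← h1]
      _ = (i+1)*(q-1) + (i+1) := by ring
    have hiq : i*q + q = (i+1)*q := by ring
    have hiq2 : i*q = i*(q-1) + i := by
      have h1 : q = (q-1)+1 := by omega
      calc i*q = i*((q-1)+1) := by rw [← h1]
      _ = i*(q-1) + i := by ring
    have hiq1 : i*(q-1) + (q-1) = (i+1)*(q-1) := by ring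
    have e1 : (n'+1-q) - i*(q-1) = n' - (i+1)*(q-1) := by omega
    have e2 : (n'+1-q) - i*q = (n'+1) - (i+1)*q := by omega
    rw [e1, e2]
    rcases Nat.lt_trichotomy ((i+1)*q) (n'+1) with hcase | hcase | hcase
    · -- generic case: terms cancel
      have hBn : (i+1)*q ≤ n' := by omega
      have hnotr : (i+1)*(q-1) + (i+1) ≤ n' := by omega
      have hNi : (n' - (i+1)*(q-1)) - i = n'+1 - (i+1)*q := by omega
      have hsucc : n'+1 - (i+1)*q = (n' - (i+1)*q) + 1 := by omega
      have hnat : (i+1) * ((n' - (i+1)*(q-1)).choose (i+1)) * Nat.factorial (n' - (i+1)*q)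
          = ((n' - (i+1)*(q-1)).choose i) * Nat.factorial (n'+1 - (i+1)*q) := by
        calc (i+1) * ((n' - (i+1)*(q-1)).choose (i+1)) * Nat.factorial (n' - (i+1)*q)
            = ((n' - (i+1)*(q-1)).choose (i+1) * (i+1)) * Nat.factorial (n' - (i+1)*q) := by
              ring
        _ = ((n' - (i+1)*(q-1)).choose i * ((n' - (i+1)*(q-1)) - i))
              * Nat.factorial (n' - (i+1)*q) := by rw [Nat.choose_succ_right_eq]
        _ = (n' - (i+1)*(q-1)).choose i * (((n' - (i+1)*(q-1)) - i)
              * Nat.factorial (n' - (i+1)*q)) := by ring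
        _ = (n' - (i+1)*(q-1)).choose i * ((n'+1 - (i+1)*q) * Nat.factorial (n' - (i+1)*q)) := by
              rw [hNi]
        _ = (n' - (i+1)*(q-1)).choose i * Nat.factorial (n'+1 - (i+1)*q) := by
              rw [hsucc, ← Nat.factorial_succ]
      rw [if_neg (by omega)]
      have hZ : ((i+1 : ℕ) : ℤ) * ((n' - (i+1)*(q-1)).choose (i+1) : ℤ)
            * (Nat.factorial (n' - (i+1)*q) : ℤ)
          = ((n' - (i+1)*(q-1)).choose i : ℤ) * (Nat.factorial (n'+1 - (i+1)*q) : ℤ) := by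
        exact_mod_cast congrArg (Nat.cast : ℕ → ℤ) hnat
      push_cast
      push_cast at hZ
      linear_combination ((-1:ℤ)^i) * hZ
    · -- boundary case
      have hN : n' - (i+1)*(q-1) = i := by omega
      have hF : n'+1 - (i+1)*q = 0 := by omega
      rw [if_pos hcase, hN, hF, Nat.choose_succ_self, Nat.choose_self, Nat.factorial_zero]
      push_cast
      ring
    · -- degenerate case: everything vanishes
      have hi1 : 1 ≤ i := by
        by_contra hcon
        have hi0 : i = 0 := by omega
        subst hi0
        omega
      have hc1 : n' - (i+1)*(q-1) < i + 1 := by omega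
      have hc2 : n' - (i+1)*(q-1) < i := by omega
      rw [if_neg (by omega), Nat.choose_eq_zero_of_lt hc1, Nat.choose_eq_zero_of_lt hc2]
      push_cast
      ring
  rw [Finset.sum_congr rfl key, Finset.sum_add_distrib]
  -- it remains to evaluate the sum of indicator terms
  have claimB : (-1:ℤ)^n' * (((n'+1-q) - n'*(q-1)).choose n' : ℤ)
      * (Nat.factorial ((n'+1-q) - n'*q) : ℤ)
      = - (if (n'+1)*q = n'+1 then (-1:ℤ)^(n'+1) else 0) := by
    rcases Nat.lt_or_ge q 2 with hq1 | hq2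
    · have hq1' : q = 1 := by omega
      subst hq1'
      simp only [Nat.sub_self, Nat.mul_zero, Nat.sub_zero, Nat.mul_one, one_mul,
        Nat.add_sub_cancel, Nat.choose_self, Nat.factorial_zero, if_pos rfl]
      push_cast
      ring
    · have hml : n' * 1 ≤ n' * (q-1) := Nat.mul_le_mul_left n' (by omega)
      rw [if_neg (by nlinarith), Nat.choose_eq_zero_of_lt (by omega)]
      push_cast
      ring
  have claimC : ∑ i ∈ Finset.range (n'+1), (if (i+1)*q = n'+1 then (-1:ℤ)^(i+1) else 0)
      = if q ∣ (n'+1) then (-1:ℤ)^((n'+1)/q) else 0 := by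
    by_cases hd : q ∣ (n'+1)
    · obtain ⟨d, hdd⟩ := id hd
      have hd1 : 1 ≤ d := by
        rcases Nat.eq_zero_or_pos d with rfl | h
        · omega
        · exact h
      have hdmul : d * 1 ≤ d * q := Nat.mul_le_mul_left d hq
      have hdle : d ≤ n' + 1 := by nlinarith [hdmul, hdd]
      have hdn : d - 1 ∈ Finset.range (n'+1) := by
        rw [Finset.mem_range]; omega
      rw [Finset.sum_eq_single_of_mem (d-1) hdn ?_]
      · have hd1' : d - 1 + 1 = d := by omega
        have hcond : (d-1+1)*q = n'+1 := by rw [hd1', Nat.mul_comm]; omega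
        rw [if_pos hcond, hd1', if_pos hd, hdd, Nat.mul_div_cancel_left d (by omega)]
      · intro i _ hne
        rw [if_neg]
        intro hcon
        apply hne
        have hdq : q * d = d * q := Nat.mul_comm q d
        have h2 : (i+1) * q = d * q := by omega
        have : i + 1 = d := Nat.eq_of_mul_eq_mul_right (by omega) h2
        omega
    · rw [if_neg hd, Finset.sum_eq_zero]
      intro i _
      rw [if_neg]
      intro hcon
      exact hd ⟨i+1, by rw [← hcon]; exact Nat.mul_comm _ _⟩
  -- assemble
  have hsplit := Finset.sum_range_succ
    (fun i => (if (i+1)*q = n'+1 then (-1:ℤ)^(i+1) else 0)) n'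
  rw [hsplit] at claimC
  linarith [claimC, claimB]


theorem stmt6 (q n : ℕ) (hq : 1 ≤ q) (hn : q < n) :
    (numAqC q (n - 1) 1 : ℤ) =
      (b q (n - q) : ℤ) + if q ∣ n then (-1 : ℤ) ^ (n / q) else 0 := by
  obtain ⟨n', rfl⟩ : ∃ n', n = n' + 1 := ⟨n - 1, by omega⟩
  have hqn : q ≤ n' := by omega
  have hA := a1_eq hq (n' + 1 - 1)
  simp only [Nat.add_sub_cancel] at hA ⊢
  have hB := b_eq hq (n' + 1 - q)
  rw [hA, hB]
  simp only [adm_card q hq]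
  exact final_sum q n' hq hqn
end
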